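/- Let R be a normal noetherian domain and I a nonzero normal ideal of R (i.e., every power Iⁿ is integrally closed). Then the Rees ring E = R[IZ] is a normal noetherian domain. -/

import Mathlib

open Polynomial

/-! Auxiliary developments -/

theorem coeff_isIntegral_of_poly_integral {A B : Type*} [CommRing A] [Field B] [Algebra A B]
    (p : B[X]) (P : Polynomial (Polynomial A)) (hP : P.Monic)
    (h0 : Polynomial.eval₂ (Polynomial.mapRingHom (algebraMap A B)) p P = 0) (k : ℕ) :
    IsIntegral A (p.coeff k) := by
  by_cases hp0 : p = 0
  · simp [hp0, isIntegral_zero]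
  set φ : A[X] →+* B[X] := Polynomial.mapRingHom (algebraMap A B) with hφ
  set m := P.natDegree with hm
  have hm1 : 1 ≤ m := by
    by_contra h
    have : m = 0 := by omega
    have : P = 1 := hP.natDegree_eq_zero.mp this
    rw [this, eval₂_one] at h0
    exact one_ne_zero h0
  set D := (Finset.range (m + 1)).sup fun i => (P.coeff i).natDegree with hD
  set N := max p.natDegree D + 1 with hN
  have hNp : p.natDegree < N := Nat.lt_succ_of_le (le_max_left _ _)
  have hND : ∀ i ≤ m, (P.coeff i).natDegree < N := by
    intro i hi
    have h1 : (P.coeff i).natDegree ≤ D := Finset.le_sup (f := fun i => (P.coeff i).natDegree) (Finset.mem_range.mpr (show i < m + 1 by omega))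
    exact Nat.lt_succ_of_le (le_trans h1 (le_max_right _ _))
  set F : A[X] := P.eval ((X : A[X]) ^ N) with hF
  have hFeq : F = (X : A[X]) ^ (N * m) +
      ∑ i ∈ Finset.range m, P.coeff i * (X : A[X]) ^ (N * i) := by
    rw [hF, eval_eq_sum_range, ← hm, Finset.sum_range_succ, hP.coeff_natDegree, one_mul,
      ← pow_mul, add_comm]
    congr 1
    apply Finset.sum_congr rfl
    intro i _
    rw [← pow_mul]
  have hFmonic : F.Monic := by
    rw [hFeq]
    apply monic_X_pow_add
    apply lt_of_le_of_lt (degree_sum_le _ _)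
    rw [Finset.sup_lt_iff (by exact_mod_cast WithBot.bot_lt_coe _)]
    intro i hi
    rw [Finset.mem_range] at hi
    calc (P.coeff i * (X : A[X]) ^ (N * i)).degree
        ≤ (P.coeff i).degree + (N * i : ℕ) := by
          apply le_trans (degree_mul_le _ _)
          gcongr
          exact degree_X_pow_le _
      _ ≤ ((P.coeff i).natDegree : WithBot ℕ) + (N * i : ℕ) := by
          gcongr
          exact degree_le_natDegree
      _ < (N * m : ℕ) := by
          rw [← Nat.cast_add, Nat.cast_lt]
          have := hND i (by omega)
          nlinarith
  have hmapF : F.map (algebraMap A B) = (P.map φ).eval ((X : B[X]) ^ N) := by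
    have h1 : F.map (algebraMap A B) = φ F := rfl
    rw [h1, hF]
    rw [show (Polynomial.eval ((X:A[X])^N) P) = eval₂ (RingHom.id A[X]) ((X:A[X])^N) P from rfl]
    rw [Polynomial.hom_eval₂ P (RingHom.id A[X]) φ ((X : A[X]) ^ N)]
    rw [eval_map]
    simp [hφ]
  have hdvd : ((X : B[X]) ^ N - p) ∣ F.map (algebraMap A B) := by
    rw [hmapF]
    have h2 := sub_dvd_eval_sub ((X : B[X]) ^ N) p (P.map φ)
    rw [eval_map, eval_map, h0, sub_zero] at h2
    rwa [eval_map]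
  have hgmonic : ((X : B[X]) ^ N - p).Monic :=
    monic_X_pow_sub (lt_of_le_of_lt degree_le_natDegree (by exact_mod_cast hNp))
  have hlift := integralClosure.mem_lifts_of_monic_of_dvd_map (R := A) B hFmonic hgmonic hdvd
  rw [lifts_iff_coeff_lifts] at hlift
  obtain ⟨z, hz⟩ := hlift k
  have hXk : ((X : B[X]) ^ N).coeff k ∈ integralClosure A B := by
    rw [coeff_X_pow]
    split_ifs
    · exact one_mem _
    · exact zero_mem _
  have hpk : p.coeff k ∈ integralClosure A B := by
    have : p.coeff k = ((X : B[X]) ^ N).coeff k - ((X : B[X]) ^ N - p).coeff k := by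
      rw [coeff_sub]; ring
    rw [this]
    exact sub_mem hXk (hz ▸ z.2)
  exact hpk


section PolyLoc
variable (R : Type*) [CommRing R] [IsDomain R]

noncomputable abbrev Kf := FractionRing R
noncomputable abbrev Lf := FractionRing R[X]

noncomputable def constSubmonoid : Submonoid R[X] :=
  (nonZeroDivisors R).map (C : R →+* R[X]).toMonoidHom

theorem isLocalization_poly :
    @IsLocalization R[X] _ (constSubmonoid R) (Kf R)[X] _
      (Polynomial.mapRingHom (algebraMap R (Kf R))).toAlgebra := by
  letI : Algebra R[X] (Kf R)[X] := (Polynomial.mapRingHom (algebraMap R (Kf R))).toAlgebra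
  have halg : algebraMap R[X] (Kf R)[X] = Polynomial.mapRingHom (algebraMap R (Kf R)) := rfl
  refine ⟨⟨?_, ?_, ?_⟩⟩
  · rintro ⟨y, r, hr, rfl⟩
    rw [halg]
    simp only [coe_mapRingHom, RingHom.toMonoidHom_eq_coe, MonoidHom.coe_coe, map_C]
    refine isUnit_C.mpr (isUnit_iff_ne_zero.mpr ?_)
    simpa using nonZeroDivisors.ne_zero hr
  · intro z
    obtain ⟨b, hb⟩ := IsLocalization.integerNormalization_map_to_map (nonZeroDivisors R) z
    refine ⟨⟨IsLocalization.integerNormalization (nonZeroDivisors R) z,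
      ⟨C (b : R), ⟨(b : R), b.2, rfl⟩⟩⟩, ?_⟩
    rw [halg]
    simp only [coe_mapRingHom]
    rw [hb, Polynomial.map_C]
    rw [← algebraMap_smul (Kf R) (b : R) z, Polynomial.smul_eq_C_mul, mul_comm]
  · intro x y h
    rw [halg] at h
    have : x = y := Polynomial.map_injective _ (IsFractionRing.injective R (Kf R)) h
    exact ⟨1, by rw [this]⟩

end PolyLoc

theorem polynomial_isIntegrallyClosed (R : Type*) [CommRing R] [IsDomain R]
    [IsIntegrallyClosed R] : IsIntegrallyClosed R[X] := by
  classical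
  letI K := Kf R
  letI L := Lf R
  letI : Algebra R[X] K[X] := (Polynomial.mapRingHom (algebraMap R K)).toAlgebra
  haveI hloc : IsLocalization (constSubmonoid R) K[X] := isLocalization_poly R
  have hunits : ∀ y : constSubmonoid R, IsUnit (algebraMap R[X] L y) := by
    rintro ⟨y, r, hr, rfl⟩
    refine isUnit_iff_ne_zero.mpr ?_
    have hC : (C r : R[X]) ≠ 0 := by
      simpa using nonZeroDivisors.ne_zero hr
    exact fun h => hC (IsFractionRing.injective R[X] L (by rw [map_zero]; exact h))
  letI : Algebra K[X] L := (IsLocalization.lift (M := constSubmonoid R) hunits).toAlgebra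
  have hcomp : ∀ x : R[X], algebraMap K[X] L (algebraMap R[X] K[X] x) = algebraMap R[X] L x := by
    intro x
    exact IsLocalization.lift_eq hunits x
  haveI : IsScalarTower R[X] K[X] L :=
    IsScalarTower.of_algebraMap_eq (fun x => (hcomp x).symm)
  haveI : IsFractionRing K[X] L :=
    IsFractionRing.isFractionRing_of_isDomain_of_isLocalization (constSubmonoid R) K[X] L
  rw [isIntegrallyClosed_iff L]
  intro x hx
  -- x integral over K[X]
  have hxK : IsIntegral K[X] x := IsIntegral.tower_top (A := K[X]) hx
  obtain ⟨p, hp⟩ := IsIntegrallyClosed.isIntegral_iff.mp hxK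
  -- p integral over R[X]
  have hpint : IsIntegral R[X] p := by
    have hinj : Function.Injective (algebraMap K[X] L) := IsFractionRing.injective K[X] L
    have := isIntegral_algHom_iff (IsScalarTower.toAlgHom R[X] K[X] L) hinj (x := p)
    rw [show (IsScalarTower.toAlgHom R[X] K[X] L) p = algebraMap K[X] L p from rfl, hp] at this
    exact this.mp hx
  obtain ⟨P, hPm, hP0⟩ := hpint
  have hcoeff : ∀ k, IsIntegral R (p.coeff k) :=
    coeff_isIntegral_of_poly_integral p P hPm hP0
  have hlifts : p ∈ Polynomial.lifts (algebraMap R K) := by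
    rw [lifts_iff_coeff_lifts]
    intro n
    obtain ⟨y, hy⟩ := IsIntegrallyClosed.isIntegral_iff.mp (hcoeff n)
    exact ⟨y, hy⟩
  obtain ⟨q, hq⟩ := (Polynomial.mem_lifts _).mp hlifts
  refine ⟨q, ?_⟩
  rw [← hcomp q]
  rw [show algebraMap R[X] K[X] q = q.map (algebraMap R K) from rfl, hq, hp]


noncomputable def thetaMap (A : Type*) [CommRing A] : Polynomial A →+* Polynomial (Polynomial A) :=
  eval₂RingHom ((C : Polynomial A →+* Polynomial (Polynomial A)).comp (C : A →+* Polynomial A))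
    (C X * X)

theorem thetaMap_coeff {A : Type*} [CommRing A] (f : Polynomial A) (k : ℕ) :
    (thetaMap A f).coeff k = Polynomial.monomial k (f.coeff k) := by
  induction f using Polynomial.induction_on' with
  | add p q hp hq => simp only [map_add, coeff_add, hp, hq]
  | monomial n a =>
    rw [thetaMap, coe_eval₂RingHom, eval₂_monomial, mul_pow, ← C_pow, RingHom.comp_apply,
      ← mul_assoc, ← map_mul, C_mul_X_pow_eq_monomial, coeff_monomial, coeff_monomial]
    split_ifs with h
    · subst h; exact C_mul_X_pow_eq_monomial
    · rw [monomial_zero_right]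

section ReesLift
variable {R : Type*} [CommRing R] (I : Ideal R)

noncomputable def reesLiftFun (e : reesAlgebra I) : Polynomial (reesAlgebra I) :=
  ∑ n ∈ (e : R[X]).support, Polynomial.monomial n
    (⟨Polynomial.monomial n ((e : R[X]).coeff n), reesAlgebra.monomial_mem.mpr (e.2 n)⟩ :
      reesAlgebra I)

theorem reesLiftFun_map (e : reesAlgebra I) :
    (reesLiftFun I e).map (algebraMap (reesAlgebra I) R[X]) = thetaMap R (e : R[X]) := by
  have hmap : (reesLiftFun I e).map (algebraMap (reesAlgebra I) R[X]) =
      ∑ n ∈ (e : R[X]).support,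
        Polynomial.monomial n (Polynomial.monomial n ((e : R[X]).coeff n)) := by
    rw [reesLiftFun, Polynomial.map_sum]
    apply Finset.sum_congr rfl
    intro n _
    rw [map_monomial]
    rfl
  apply Polynomial.ext
  intro k
  rw [hmap, thetaMap_coeff, finset_sum_coeff]
  simp only [coeff_monomial]
  rw [Finset.sum_ite_eq']
  split_ifs with h
  · rfl
  · rw [notMem_support_iff.mp h, monomial_zero_right]
theorem reesLift_map_injective :
    Function.Injective fun q : Polynomial (reesAlgebra I) =>
      q.map (algebraMap (reesAlgebra I) R[X]) :=
  Polynomial.map_injective _ Subtype.val_injective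

noncomputable def reesLift : reesAlgebra I →+* Polynomial (reesAlgebra I) where
  toFun := reesLiftFun I
  map_one' := by
    apply reesLift_map_injective I
    simp only [reesLiftFun_map, Polynomial.map_one]
    rw [OneMemClass.coe_one, map_one]
  map_mul' x y := by
    apply reesLift_map_injective I
    simp only [reesLiftFun_map, Polynomial.map_mul]
    rw [MulMemClass.coe_mul, map_mul]
  map_zero' := by
    apply reesLift_map_injective I
    simp only [reesLiftFun_map, Polynomial.map_zero]
    rw [ZeroMemClass.coe_zero, map_zero]
  map_add' x y := by
    apply reesLift_map_injective I
    simp only [reesLiftFun_map, Polynomial.map_add]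
    rw [AddMemClass.coe_add, map_add]

theorem reesLift_map (e : reesAlgebra I) :
    (reesLift I e).map (algebraMap (reesAlgebra I) R[X]) = thetaMap R (e : R[X]) :=
  reesLiftFun_map I e

end ReesLift

/-! Statement definitions -/

/-- An ideal `J` of `R` is integrally closed (complete) if every element of `R` integral
over `J` (i.e. satisfying an equation `rⁿ + a₁ rⁿ⁻¹ + ⋯ + aₙ = 0` with `aᵢ ∈ Jⁱ`)
belongs to `J`. -/
def Ideal.IsIntegrallyClosedIdeal {R : Type*} [CommRing R] (J : Ideal R) : Prop :=
  ∀ r : R,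
    (∃ n : ℕ, 0 < n ∧ ∃ a : ℕ → R,
        (∀ i, 1 ≤ i → i ≤ n → a i ∈ J ^ i) ∧
        r ^ n + ∑ i ∈ Finset.Icc 1 n, a i * r ^ (n - i) = 0) →
    r ∈ J

/-- An ideal is normal if all its powers are integrally closed. -/
def Ideal.IsNormalIdeal {R : Type*} [CommRing R] (J : Ideal R) : Prop :=
  ∀ n : ℕ, 1 ≤ n → (J ^ n).IsIntegrallyClosedIdeal

/-- If `R` is a normal noetherian domain and `I` a nonzero normal ideal of `R`,
then the Rees ring `E = R[IZ]` is a normal noetherian domain. -/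
theorem rees_ring_of_normal_ideal_is_normal_noetherian_domain
    (R : Type*) [CommRing R] [IsDomain R] [IsNoetherianRing R] [IsIntegrallyClosed R]
    (I : Ideal R) (hI : I ≠ ⊥) (hIn : I.IsNormalIdeal) :
    IsDomain (reesAlgebra I) ∧ IsNoetherianRing (reesAlgebra I) ∧
      IsIntegrallyClosed (reesAlgebra I) := by
  classical
  refine ⟨inferInstance, inferInstance, ?_⟩
  letI L := FractionRing R[X]
  letI : Algebra (reesAlgebra I) L :=
    ((algebraMap R[X] L).comp (algebraMap (reesAlgebra I) R[X])).toAlgebra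
  haveI : @IsScalarTower (reesAlgebra I) R[X] L Algebra.toSMul Algebra.toSMul Algebra.toSMul :=
    IsScalarTower.of_algebraMap_eq'
      (rfl : algebraMap (reesAlgebra I) L
        = (algebraMap R[X] L).comp (algebraMap (reesAlgebra I) R[X]))
  obtain ⟨a, haI, ha0⟩ := (Submodule.ne_bot_iff I).mp hI
  haveI hfr : IsFractionRing (reesAlgebra I) L := by
    refine ⟨⟨?_, ?_, ?_⟩⟩
    · rintro ⟨y, hy⟩
      refine isUnit_iff_ne_zero.mpr ?_
      have hy0 : y ≠ 0 := nonZeroDivisors.ne_zero hy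
      have hyv : (y : R[X]) ≠ 0 := fun h => hy0 (Subtype.ext h)
      intro h
      exact hyv (IsFractionRing.injective R[X] L (by rw [map_zero]; exact h))
    · intro z
      obtain ⟨⟨num, den⟩, hzd⟩ := IsLocalization.surj (nonZeroDivisors R[X]) z
      set N := max num.natDegree (den : R[X]).natDegree with hN
      have hmk : ∀ g : R[X], g.natDegree ≤ N → (C (a ^ N) * g) ∈ reesAlgebra I := by
        intro g hg i
        rw [coeff_C_mul]
        rcases le_or_gt i N with h | h
        · exact Ideal.mul_mem_right _ _ (Ideal.pow_le_pow_right h (Ideal.pow_mem_pow haI N))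
        · rw [coeff_eq_zero_of_natDegree_lt (lt_of_le_of_lt hg h), mul_zero]
          exact zero_mem _
      refine ⟨⟨⟨C (a ^ N) * num, hmk num (le_max_left _ _)⟩,
        ⟨⟨C (a ^ N) * (den : R[X]), hmk den (le_max_right _ _)⟩, ?_⟩⟩, ?_⟩
      · apply mem_nonZeroDivisors_of_ne_zero
        intro h
        have hv : (C (a ^ N) * (den : R[X])) = 0 := congrArg Subtype.val h
        rcases mul_eq_zero.mp hv with h' | h'
        · exact pow_ne_zero N ha0 (C_eq_zero.mp h')
        · exact nonZeroDivisors.ne_zero den.2 h'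
      · show z * algebraMap R[X] L (C (a ^ N) * (den : R[X]))
            = algebraMap R[X] L (C (a ^ N) * num)
        rw [map_mul, map_mul,
          show z * (algebraMap R[X] L (C (a ^ N)) * algebraMap R[X] L (den : R[X]))
            = algebraMap R[X] L (C (a ^ N)) * (z * algebraMap R[X] L (den : R[X])) from by ring,
          hzd]
    · intro x y h
      refine ⟨1, ?_⟩
      have hv : (x : R[X]) = y := IsFractionRing.injective R[X] L h
      simp only [OneMemClass.coe_one, one_mul]
      exact Subtype.ext hv
  haveI : IsIntegrallyClosed R[X] := polynomial_isIntegrallyClosed R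
  rw [isIntegrallyClosed_iff L]
  intro x hx
  have hxR : IsIntegral R[X] x := IsIntegral.tower_top (A := R[X]) hx
  obtain ⟨f, hf⟩ := IsIntegrallyClosed.isIntegral_iff.mp hxR
  have key : ∀ (u : R[X]) (Q : Polynomial (reesAlgebra I)),
      eval₂ (algebraMap (reesAlgebra I) L) (algebraMap R[X] L u) Q = 0 →
      eval₂ (algebraMap (reesAlgebra I) R[X]) u Q = 0 := by
    intro u Q h
    apply IsFractionRing.injective R[X] L
    rw [map_zero, Polynomial.hom_eval₂]
    exact h
  set ρ : R[X] →+* L[X] := (Polynomial.mapRingHom (algebraMap R[X] L)).comp (thetaMap R) with hρ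
  have hint : ∀ k, IsIntegral (reesAlgebra I)
      (algebraMap R[X] L (Polynomial.monomial k (f.coeff k))) := by
    intro k
    obtain ⟨Q, hQm, hQ0⟩ := hx
    have hE1 : eval₂ (algebraMap (reesAlgebra I) R[X]) f Q = 0 :=
      key f Q (by rw [hf]; exact hQ0)
    have hP0 : eval₂ (Polynomial.mapRingHom (algebraMap (reesAlgebra I) L)) (ρ f)
        (Q.map (reesLift I)) = 0 := by
      rw [Polynomial.eval₂_map]
      have hcomm : (Polynomial.mapRingHom (algebraMap (reesAlgebra I) L)).comp (reesLift I)
          = ρ.comp (algebraMap (reesAlgebra I) R[X]) := by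
        apply RingHom.ext
        intro e
        show (reesLift I e).map (algebraMap (reesAlgebra I) L)
            = ρ ((algebraMap (reesAlgebra I) R[X]) e)
        have h2 : algebraMap (reesAlgebra I) L
            = (algebraMap R[X] L).comp (algebraMap (reesAlgebra I) R[X]) := rfl
        rw [h2, ← Polynomial.map_map, reesLift_map]
        rfl
      rw [hcomm]
      have h3 := Polynomial.hom_eval₂ Q (algebraMap (reesAlgebra I) R[X]) ρ f
      rw [hE1, map_zero] at h3
      exact h3.symm
    have hI2 := coeff_isIntegral_of_poly_integral (ρ f) (Q.map (reesLift I)) (hQm.map _) hP0 k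
    have hcoe : (ρ f).coeff k = algebraMap R[X] L (Polynomial.monomial k (f.coeff k)) := by
      rw [hρ, RingHom.comp_apply, coe_mapRingHom, coeff_map, thetaMap_coeff]
    rwa [hcoe] at hI2
  have hmem : ∀ k, f.coeff k ∈ I ^ k := by
    intro k
    rcases Nat.eq_zero_or_pos k with hk | hk
    · subst hk; rw [pow_zero, Ideal.one_eq_top]; exact Submodule.mem_top
    obtain ⟨Q', hQ'm, hQ'0⟩ := hint k
    have hE2 : eval₂ (algebraMap (reesAlgebra I) R[X]) (Polynomial.monomial k (f.coeff k)) Q' = 0 :=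
      key _ _ hQ'0
    set c := f.coeff k with hc
    set m := Q'.natDegree with hm
    have hm1 : 1 ≤ m := by
      by_contra h
      have h0 : m = 0 := by omega
      rw [hQ'm.natDegree_eq_zero.mp h0, eval₂_one] at hE2
      exact one_ne_zero hE2
    have hsum : ∑ j ∈ Finset.range (m + 1),
        (algebraMap (reesAlgebra I) R[X]) (Q'.coeff j) * (Polynomial.monomial k c) ^ j = 0 := by
      rw [← hE2, eval₂_eq_sum_range]
    have hco := congrArg (fun g : R[X] => g.coeff (k * m)) hsum
    simp only [finset_sum_coeff, coeff_zero] at hco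
    have hterm : ∀ j ∈ Finset.range (m + 1),
        ((algebraMap (reesAlgebra I) R[X]) (Q'.coeff j) * (Polynomial.monomial k c) ^ j).coeff
            (k * m)
        = ((algebraMap (reesAlgebra I) R[X]) (Q'.coeff j)).coeff (k * (m - j)) * c ^ j := by
      intro j hj
      rw [Finset.mem_range] at hj
      rw [Polynomial.monomial_pow,
        show k * m = k * (m - j) + k * j from by
          rw [← Nat.left_distrib, Nat.sub_add_cancel (by omega)],
        Polynomial.coeff_mul_monomial]
    rw [Finset.sum_congr rfl hterm, Finset.sum_range_succ] at hco
    have htop : ((algebraMap (reesAlgebra I) R[X]) (Q'.coeff m)).coeff (k * (m - m)) * c ^ m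
        = c ^ m := by
      rw [show Q'.coeff m = 1 from hQ'm.coeff_natDegree, map_one, Nat.sub_self, Nat.mul_zero]
      simp
    rw [htop] at hco
    apply hIn k hk
    refine ⟨m, by omega,
      fun i => ((algebraMap (reesAlgebra I) R[X]) (Q'.coeff (m - i))).coeff (k * i), ?_, ?_⟩
    · intro i h1 h2
      rw [← pow_mul]
      exact (Q'.coeff (m - i)).2 (k * i)
    · have hre : ∑ i ∈ Finset.Icc 1 m,
          (((algebraMap (reesAlgebra I) R[X]) (Q'.coeff (m - i))).coeff (k * i)) * c ^ (m - i)
          = ∑ j ∈ Finset.range m,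
            ((algebraMap (reesAlgebra I) R[X]) (Q'.coeff j)).coeff (k * (m - j)) * c ^ j := by
        apply Finset.sum_bij' (fun i _ => m - i) (fun j _ => m - j)
        · intro i hi
          rw [Finset.mem_Icc] at hi
          rw [Finset.mem_range]
          omega
        · intro j hj
          rw [Finset.mem_range] at hj
          rw [Finset.mem_Icc]
          omega
        · intro i hi
          rw [Finset.mem_Icc] at hi
          omega
        · intro j hj
          rw [Finset.mem_range] at hj
          omega
        · intro i hi
          rw [Finset.mem_Icc] at hi
          rw [show m - (m - i) = i from by omega]
      rw [hre, add_comm]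
      exact hco
  exact ⟨⟨f, hmem⟩, hf⟩
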